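/- Exact second-order remainder identity for the treatment-specific mean: for every σ(W)-measurable Q : Ω → ℝ with values in [0,1] and every σ(W)-measurable G : Ω → ℝ with δ ≤ G ≤ 1 P-a.s., one has Ψ(Q) − Ψ(Q₀) + E[(A/G)·(Y − Q)] = E[((G − G₀)/G)·(Q − Q₀)] (the paper's formula R₂₀(Q,G,Q₀,G₀) = P₀ (G − G₀)/G (Q − Q₀) for the remainder implied by the canonical gradient D*(Q,G)(O) = (A/G(W))(Y − Q(W))). -/

import Mathlib

open MeasureTheory

/-- Exact second-order remainder identity for the treatment-specific mean:
`Ψ(Q) − Ψ(Q₀) + P₀ D*(Q,G) = P₀ ((G − G₀)/G)(Q − Q₀)` where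
`D*(Q,G)(O) = (A/G(W))(Y − Q(W))` and `Ψ(Q) = E[Q]`. -/
theorem stmt_3
    {Ω 𝒲 : Type*} [MeasurableSpace Ω] [MeasurableSpace 𝒲]
    (P : Measure Ω) [IsProbabilityMeasure P]
    (W : Ω → 𝒲) (A Y G₀ Q₀ : Ω → ℝ)
    (hW : Measurable W) (hA : Measurable A) (hY : Measurable Y)
    (hAbin : ∀ ω, A ω = 0 ∨ A ω = 1)
    (hYrange : ∀ ω, Y ω ∈ Set.Icc (0:ℝ) 1)
    (hG₀ : G₀ =ᵐ[P] P[A|MeasurableSpace.comap W inferInstance])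
    (δ : ℝ) (hδ : δ ∈ Set.Ioo (0:ℝ) 1)
    (hpos : ∀ᵐ ω ∂P, δ ≤ G₀ ω)
    (hQ₀meas : Measurable[MeasurableSpace.comap W inferInstance] Q₀)
    (hQ₀range : ∀ ω, Q₀ ω ∈ Set.Icc (0:ℝ) 1)
    (hQ₀orth : ∀ f : Ω → ℝ, Measurable[MeasurableSpace.comap W inferInstance] f →
      (∃ C : ℝ, ∀ ω, |f ω| ≤ C) →
      ∫ ω, A ω * (Y ω - Q₀ ω) * f ω ∂P = 0)
    (Q G : Ω → ℝ)
    (hQmeas : Measurable[MeasurableSpace.comap W inferInstance] Q)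
    (hQrange : ∀ ω, Q ω ∈ Set.Icc (0:ℝ) 1)
    (hGmeas : Measurable[MeasurableSpace.comap W inferInstance] G)
    (hGrange : ∀ᵐ ω ∂P, δ ≤ G ω ∧ G ω ≤ 1) :
    (∫ ω, Q ω ∂P) - (∫ ω, Q₀ ω ∂P) + (∫ ω, (A ω / G ω) * (Y ω - Q ω) ∂P)
      = ∫ ω, ((G ω - G₀ ω) / G ω) * (Q ω - Q₀ ω) ∂P := by
  classical
  have hm : MeasurableSpace.comap W inferInstance ≤ ‹MeasurableSpace Ω› := hW.comap_le
  -- truncated version of G, equal a.e. but bounded everywhere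
  set G' : Ω → ℝ := fun ω => max δ (min (G ω) 1) with hG'def
  have hG'measm : Measurable[MeasurableSpace.comap W inferInstance] G' :=
    measurable_const.max (hGmeas.min measurable_const)
  have hG'meas : Measurable G' := hG'measm.mono hm le_rfl
  have hG'lb : ∀ ω, δ ≤ G' ω := fun ω => le_max_left _ _
  have hG'pos : ∀ ω, 0 < G' ω := fun ω => lt_of_lt_of_le hδ.1 (hG'lb ω)
  have hG'ub : ∀ ω, G' ω ≤ 1 := fun ω => max_le hδ.2.le (min_le_right _ _)
  have hGae : G =ᵐ[P] G' := by
    filter_upwards [hGrange] with ω hω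
    simp only [hG'def]
    rw [min_eq_left hω.2, max_eq_right hω.1]
  have hAbd : ∀ ω, |A ω| ≤ 1 := by
    intro ω; rcases hAbin ω with h | h <;> simp [h]
  -- the function f = (Q₀ - Q)/G'
  set f : Ω → ℝ := fun ω => (Q₀ ω - Q ω) / G' ω with hfdef
  have hfmeasm : Measurable[MeasurableSpace.comap W inferInstance] f :=
    (hQ₀meas.sub hQmeas).div hG'measm
  have hfmeas : Measurable f := hfmeasm.mono hm le_rfl
  have hfbd : ∀ ω, |f ω| ≤ 1 / δ := by
    intro ω
    have h2 := hQ₀range ω; have h3 := hQrange ω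
    simp only [Set.mem_Icc] at h2 h3
    have h1 : |Q₀ ω - Q ω| ≤ 1 := by
      rw [abs_le]; exact ⟨by linarith, by linarith⟩
    calc |f ω| = |Q₀ ω - Q ω| / |G' ω| := abs_div _ _
    _ ≤ 1 / δ := by
        rw [abs_of_pos (hG'pos ω)]
        exact div_le_div₀ zero_le_one h1 hδ.1 (hG'lb ω)
  -- integrability helper
  have hInt : ∀ (g : Ω → ℝ) (C : ℝ), Measurable g → (∀ ω, |g ω| ≤ C) → Integrable g P := by
    intro g C hg hgb
    exact (integrable_const C (μ := P)).mono'
      (hg.aestronglyMeasurable : AEStronglyMeasurable g P)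
      (Filter.Eventually.of_forall fun ω => by simpa using hgb ω)
  have hQ₀measG : Measurable Q₀ := hQ₀meas.mono hm le_rfl
  have hQmeasG : Measurable Q := hQmeas.mono hm le_rfl
  have hδinv : (0:ℝ) < 1 / δ := one_div_pos.mpr hδ.1
  have habs1 : ∀ (g : Ω → ℝ), (∀ ω, g ω ∈ Set.Icc (0:ℝ) 1) → ∀ ω, |g ω| ≤ 1 := by
    intro g hg ω
    have := hg ω; simp only [Set.mem_Icc] at this
    rw [abs_le]; exact ⟨by linarith, this.2⟩
  -- integrabilities
  have intQ : Integrable Q P := hInt Q 1 hQmeasG (habs1 Q hQrange)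
  have intQ₀ : Integrable Q₀ P := hInt Q₀ 1 hQ₀measG (habs1 Q₀ hQ₀range)
  have intA : Integrable A P := hInt A 1 hA hAbd
  have intfA : Integrable (f * A) P := by
    apply hInt _ (1 / δ) (hfmeas.mul hA)
    intro ω
    calc |(f * A) ω| = |f ω| * |A ω| := abs_mul _ _
    _ ≤ (1 / δ) * 1 := mul_le_mul (hfbd ω) (hAbd ω) (abs_nonneg _) hδinv.le
    _ = 1 / δ := mul_one _
  have int1 : Integrable (fun ω => A ω * (Y ω - Q₀ ω) * (G' ω)⁻¹) P := by
    apply hInt _ (1 / δ) ((hA.mul (hY.sub hQ₀measG)).mul hG'meas.inv)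
    intro ω
    have hY1 := habs1 Y hYrange ω
    have hQ1 := habs1 Q₀ hQ₀range ω
    have h2 := hYrange ω; have h3 := hQ₀range ω
    simp only [Set.mem_Icc] at h2 h3
    have hsub : |Y ω - Q₀ ω| ≤ 1 := by rw [abs_le]; exact ⟨by linarith, by linarith⟩
    have hinv : |(G' ω)⁻¹| ≤ 1 / δ := by
      rw [abs_of_pos (inv_pos.mpr (hG'pos ω)), one_div]
      exact inv_anti₀ hδ.1 (hG'lb ω)
    calc |A ω * (Y ω - Q₀ ω) * (G' ω)⁻¹| = |A ω| * |Y ω - Q₀ ω| * |(G' ω)⁻¹| := by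
          rw [abs_mul, abs_mul]
    _ ≤ 1 * 1 * (1 / δ) := by
          apply mul_le_mul _ hinv (abs_nonneg _) (by norm_num)
          exact mul_le_mul (hAbd ω) hsub (abs_nonneg _) zero_le_one
    _ = 1 / δ := by ring
  -- conditional expectation step: ∫ f A = ∫ f G₀
  have hcondA : Integrable (P[A|MeasurableSpace.comap W inferInstance]) P :=
    integrable_condExp
  have intG₀ : Integrable G₀ P := hcondA.congr hG₀.symm
  have intfG₀ : Integrable (f * G₀) P :=
    intG₀.bdd_mul (hfmeas.aestronglyMeasurable : AEStronglyMeasurable f P)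
      (c := 1 / δ) (Filter.Eventually.of_forall fun ω => by simpa using hfbd ω)
  have hkey : ∫ ω, f ω * A ω ∂P = ∫ ω, f ω * G₀ ω ∂P := by
    have hpull := condExp_mul_of_stronglyMeasurable_left (μ := P) (m := MeasurableSpace.comap W inferInstance)
      hfmeasm.stronglyMeasurable intfA intA
    calc ∫ ω, f ω * A ω ∂P
        = ∫ ω, (P[f * A|MeasurableSpace.comap W inferInstance]) ω ∂P :=
          (integral_condExp hm).symm
    _ = ∫ ω, f ω * (P[A|MeasurableSpace.comap W inferInstance]) ω ∂P := by
          refine integral_congr_ae (hpull.mono fun ω hω => ?_)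
          simpa using hω
    _ = ∫ ω, f ω * G₀ ω ∂P := by
          refine integral_congr_ae (hG₀.mono fun ω hω => ?_)
          simp only [hω]
  -- orthogonality step
  have horth : ∫ ω, A ω * (Y ω - Q₀ ω) * (G' ω)⁻¹ ∂P = 0 := by
    apply hQ₀orth _ hG'measm.inv
    refine ⟨1 / δ, fun ω => ?_⟩
    rw [Pi.inv_apply, abs_of_pos (inv_pos.mpr (hG'pos ω)), one_div]
    exact inv_anti₀ hδ.1 (hG'lb ω)
  -- rewrite both sides with G'
  have hLHS : ∫ ω, (A ω / G ω) * (Y ω - Q ω) ∂P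
      = ∫ ω, (A ω / G' ω) * (Y ω - Q ω) ∂P := by
    refine integral_congr_ae (hGae.mono fun ω hω => ?_); simp only [hω]
  have hRHS : ∫ ω, ((G ω - G₀ ω) / G ω) * (Q ω - Q₀ ω) ∂P
      = ∫ ω, ((G' ω - G₀ ω) / G' ω) * (Q ω - Q₀ ω) ∂P := by
    refine integral_congr_ae (hGae.mono fun ω hω => ?_); simp only [hω]
  -- decompose LHS integrand
  have hdecomp : ∀ ω, (A ω / G' ω) * (Y ω - Q ω)
      = A ω * (Y ω - Q₀ ω) * (G' ω)⁻¹ + f ω * A ω := by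
    intro ω
    have hne : G' ω ≠ 0 := (hG'pos ω).ne'
    simp only [hfdef]
    field_simp
    ring
  have hLHS2 : ∫ ω, (A ω / G' ω) * (Y ω - Q ω) ∂P = ∫ ω, f ω * A ω ∂P := by
    calc ∫ ω, (A ω / G' ω) * (Y ω - Q ω) ∂P
        = ∫ ω, (A ω * (Y ω - Q₀ ω) * (G' ω)⁻¹ + f ω * A ω) ∂P := by
          exact integral_congr_ae (Filter.Eventually.of_forall hdecomp)
    _ = (∫ ω, A ω * (Y ω - Q₀ ω) * (G' ω)⁻¹ ∂P) + ∫ ω, f ω * A ω ∂P :=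
          integral_add int1 intfA
    _ = ∫ ω, f ω * A ω ∂P := by rw [horth, zero_add]
  -- decompose RHS integrand
  have hdecompR : ∀ ω, ((G' ω - G₀ ω) / G' ω) * (Q ω - Q₀ ω)
      = (Q ω - Q₀ ω) + f ω * G₀ ω := by
    intro ω
    have hne : G' ω ≠ 0 := (hG'pos ω).ne'
    simp only [hfdef]
    field_simp
    ring
  have intQsub : Integrable (fun ω => Q ω - Q₀ ω) P := intQ.sub intQ₀
  have hRHS2 : ∫ ω, ((G' ω - G₀ ω) / G' ω) * (Q ω - Q₀ ω) ∂P
      = (∫ ω, Q ω ∂P) - (∫ ω, Q₀ ω ∂P) + ∫ ω, f ω * G₀ ω ∂P := by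
    calc ∫ ω, ((G' ω - G₀ ω) / G' ω) * (Q ω - Q₀ ω) ∂P
        = ∫ ω, ((Q ω - Q₀ ω) + f ω * G₀ ω) ∂P :=
          integral_congr_ae (Filter.Eventually.of_forall hdecompR)
    _ = (∫ ω, (Q ω - Q₀ ω) ∂P) + ∫ ω, f ω * G₀ ω ∂P := integral_add intQsub intfG₀
    _ = (∫ ω, Q ω ∂P) - (∫ ω, Q₀ ω ∂P) + ∫ ω, f ω * G₀ ω ∂P := by
          rw [integral_sub intQ intQ₀]
  rw [hLHS, hRHS, hLHS2, hRHS2, hkey]
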